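/- For decorated trees T1, T2 and an integer i with 1 ≤ i ≤ fl(T1), the tree ⊕_T(T1, i, T2) obtained by identifying the roots of Δ_T(T1, i) and T2 (with subtrees of Δ_T(T1,i) placed to the left) is a decorated tree satisfying hd_T(⊕_T(T1,i,T2)) = T1, tl_T(⊕_T(T1,i,T2)) = T2, and fl(⊕_T(T1,i,T2)) = i + fl(T2). -/
import Mathlib


/-- Rooted plane trees with integer labels on the leaves. -/
inductive DTree where
  | leaf : ℤ → DTree
  | node : List DTree → DTree

mutual
/-- The list of leaf labels of a tree, in left-to-right (prefix traversal) order. -/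
def leafLabels : DTree → List ℤ
  | .leaf l => [l]
  | .node ts => leafLabelsList ts
def leafLabelsList : List DTree → List ℤ
  | [] => []
  | t :: ts => leafLabels t ++ leafLabelsList ts
end

/-- The three conditions of decorated trees, for a subtree whose root is at depth `d`:
leaf labels are at least -1 and strictly less than the depth of their parent;
every internal node of positive depth `d` has a descendant leaf labeled at most `d - 2`;
and in any direct subtree of an internal node of depth `d`, a leaf labeled `d` is
preceded in traversal order only by leaves labeled at least `d`. -/
inductive DecoAt : DTree → ℕ → Prop where
  | leaf {l : ℤ} {d : ℕ} (h1 : -1 ≤ l) (h2 : l < (d : ℤ) - 1) : DecoAt (.leaf l) d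
  | node {ts : List DTree} {d : ℕ} (hne : ts ≠ [])
      (h2 : 0 < d → ∃ x ∈ leafLabelsList ts, x ≤ (d : ℤ) - 2)
      (h3 : ∀ t' ∈ ts, ∀ a b, leafLabels t' = a ++ (d : ℤ) :: b → ∀ x ∈ a, (d : ℤ) ≤ x)
      (h4 : ∀ t' ∈ ts, DecoAt t' (d + 1)) : DecoAt (.node ts) d

/-- A decorated tree: the root is at depth 0. -/
def IsDeco (T : DTree) : Prop := DecoAt T 0

/-- The number of free leaves (leaves labeled -1). -/
def fl (T : DTree) : ℕ := (leafLabels T).count (-1)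

mutual
/-- Increment leaf labels, where the counter `m` is the number of free leaves (from
the left) that still must be incremented; once it reaches 0, remaining free leaves
are left untouched. Returns the new tree and the remaining counter. -/
def incUpTo : DTree → ℕ → DTree × ℕ
  | .leaf l, m =>
      if l = -1 then (if 0 < m then (.leaf 0, m - 1) else (.leaf (-1), m))
      else (.leaf (l + 1), m)
  | .node ts, m =>
      let p := incList ts m
      (.node p.1, p.2)
def incList : List DTree → ℕ → List DTree × ℕ
  | [], m => ([], m)
  | t :: ts, m =>
      let p := incUpTo t m
      let q := incList ts p.2
      (p.1 :: q.1, q.2)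
end

/-- Δ_T(T,i): attach `T` under a new root vertex and add 1 to every leaf label,
except for the last `i` free leaves (in traversal order). -/
def deltaT (T : DTree) (i : ℕ) : DTree := .node [(incUpTo T (fl T - i)).1]

mutual
/-- Subtract 1 from every non-free leaf label. -/
def decLeaves : DTree → DTree
  | .leaf l => if l = -1 then .leaf (-1) else .leaf (l - 1)
  | .node ts => .node (decList ts)
def decList : List DTree → List DTree
  | [] => []
  | t :: ts => decLeaves t :: decList ts
end

/-- Π_T: remove the root (which has a unique child) and subtract 1 from every
non-free leaf label. -/
def piT : DTree → DTree
  | .node [t] => decLeaves t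
  | t => t

/-- ⊕_T(T1,i,T2): identify the roots of Δ_T(T1,i) and T2, with the subtrees of
Δ_T(T1,i) placed to the left. -/
def oplusT (T1 : DTree) (i : ℕ) (T2 : DTree) : DTree :=
  match deltaT T1 i, T2 with
  | .node a, .node b => .node (a ++ b)
  | _, _ => deltaT T1 i

/-- hd_T: split off the leftmost direct subtree of the root and apply Π_T to it
(i.e. decrement its non-free leaf labels). -/
def hdT : DTree → DTree
  | .node (c :: _) => decLeaves c
  | t => t

/-- tl_T: the tree remaining after removing the leftmost direct subtree of the root. -/
def tlT : DTree → DTree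
  | .node (_ :: rest) => .node rest
  | t => t


section Aux

/-- list-level model of `incUpTo` on leaf labels -/
def incLab : List ℤ → ℕ → List ℤ × ℕ
  | [], m => ([], m)
  | l :: ls, m =>
    if l = -1 then
      (if 0 < m then ((0:ℤ) :: (incLab ls (m-1)).1, (incLab ls (m-1)).2)
       else ((-1:ℤ) :: (incLab ls m).1, (incLab ls m).2))
    else ((l+1) :: (incLab ls m).1, (incLab ls m).2)

theorem incLab_append (L1 L2 : List ℤ) (m : ℕ) :
    incLab (L1 ++ L2) m =
      ((incLab L1 m).1 ++ (incLab L2 (incLab L1 m).2).1, (incLab L2 (incLab L1 m).2).2) := by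
  induction L1 generalizing m with
  | nil => simp [incLab]
  | cons l ls ih =>
    by_cases hl : l = -1
    · by_cases hm : 0 < m <;> simp [incLab, hl, hm, ih]
    · simp [incLab, hl, ih]

mutual
theorem bridge : ∀ (T : DTree) (m : ℕ),
    leafLabels (incUpTo T m).1 = (incLab (leafLabels T) m).1 ∧
    (incUpTo T m).2 = (incLab (leafLabels T) m).2
  | .leaf l, m => by
      by_cases hl : l = -1
      · by_cases hm : 0 < m <;> simp [incUpTo, leafLabels, incLab, hl, hm]
      · simp [incUpTo, leafLabels, incLab, hl]
  | .node ts, m => by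
      have h := bridgeL ts m
      simpa [incUpTo, leafLabels] using h
theorem bridgeL : ∀ (ts : List DTree) (m : ℕ),
    leafLabelsList (incList ts m).1 = (incLab (leafLabelsList ts) m).1 ∧
    (incList ts m).2 = (incLab (leafLabelsList ts) m).2
  | [], m => by simp [incList, leafLabelsList, incLab]
  | t :: ts, m => by
      have h1 := bridge t m
      have h2 := bridgeL ts (incUpTo t m).2
      simp only [incList, leafLabelsList, incLab_append]
      constructor
      · rw [h1.1, h2.1, h1.2]
      · rw [h2.2, h1.2]
end

theorem incLab_count : ∀ (L : List ℤ) (m : ℕ), (∀ x ∈ L, -1 ≤ x) → m ≤ L.count (-1) →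
    (incLab L m).1.count (-1) = L.count (-1) - m
  | [], m, _, hm => by simp [incLab]
  | l :: ls, m, hlb, hm => by
      have hlbl : -1 ≤ l := hlb l (by simp)
      have hlbs : ∀ x ∈ ls, -1 ≤ x := fun x hx => hlb x (by simp [hx])
      by_cases hl : l = -1
      · subst hl
        simp only [List.count_cons_self] at hm
        by_cases hmp : 0 < m
        · have ih := incLab_count ls (m-1) hlbs (by omega)
          simp only [incLab, if_pos rfl, if_pos hmp, List.count_cons, ih]
          norm_num
          omega
        · have ih := incLab_count ls m hlbs (by omega)
          simp only [incLab, if_pos rfl, if_neg hmp, List.count_cons, ih]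
          norm_num
          omega
      · have hm' : m ≤ ls.count (-1) := by
          rw [List.count_cons, if_neg (by simp only [beq_iff_eq]; omega)] at hm
          omega
        have ih := incLab_count ls m hlbs hm'
        simp only [incLab, if_neg hl, List.count_cons, ih]
        rw [if_neg (by simp only [beq_iff_eq]; omega), if_neg (by simp only [beq_iff_eq]; omega)]
        omega

theorem incLab_exists_le : ∀ (L : List ℤ) (m : ℕ) (c : ℤ),
    (∃ x ∈ L, x ≤ c) → ∃ y ∈ (incLab L m).1, y ≤ c + 1
  | [], m, c, h => by simp at h
  | l :: ls, m, c, h => by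
      rcases h with ⟨x, hx, hxc⟩
      rcases List.mem_cons.1 hx with rfl | hx
      · by_cases hl : x = -1
        · by_cases hm : 0 < m
          · refine ⟨0, ?_, by omega⟩
            simp [incLab, hl, hm]
          · refine ⟨-1, ?_, by omega⟩
            simp [incLab, hl, hm]
        · refine ⟨x + 1, ?_, by omega⟩
          simp [incLab, hl]
      · by_cases hl : l = -1
        · by_cases hm : 0 < m
          · obtain ⟨y, hy, hyc⟩ := incLab_exists_le ls (m-1) c ⟨x, hx, hxc⟩
            refine ⟨y, ?_, hyc⟩
            simp [incLab, hl, hm, hy]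
          · obtain ⟨y, hy, hyc⟩ := incLab_exists_le ls m c ⟨x, hx, hxc⟩
            refine ⟨y, ?_, hyc⟩
            simp [incLab, hl, hm, hy]
        · obtain ⟨y, hy, hyc⟩ := incLab_exists_le ls m c ⟨x, hx, hxc⟩
          refine ⟨y, ?_, hyc⟩
          simp [incLab, hl, hy]

theorem incLab_mem_pos : ∀ (L : List ℤ) (m : ℕ) (c : ℤ), 0 < c →
    c ∈ (incLab L m).1 → c - 1 ∈ L
  | [], m, c, hc, h => by simp [incLab] at h
  | l :: ls, m, c, hc, h => by
      by_cases hl : l = -1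
      · by_cases hm : 0 < m
        · simp only [incLab, if_pos hl, if_pos hm, List.mem_cons] at h
          rcases h with h | h
          · omega
          · exact List.mem_cons_of_mem _ (incLab_mem_pos ls (m-1) c hc h)
        · simp only [incLab, if_pos hl, if_neg hm, List.mem_cons] at h
          rcases h with h | h
          · omega
          · exact List.mem_cons_of_mem _ (incLab_mem_pos ls m c hc h)
      · simp only [incLab, if_neg hl, List.mem_cons] at h
        rcases h with h | h
        · exact List.mem_cons.2 (Or.inl (by omega))
        · exact List.mem_cons_of_mem _ (incLab_mem_pos ls m c hc h)

theorem incLab_zero_not_mem : ∀ (L : List ℤ), (∀ x ∈ L, -1 ≤ x) →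
    (0:ℤ) ∉ (incLab L 0).1
  | [], _ => by simp [incLab]
  | l :: ls, hlb => by
      have hlbl : -1 ≤ l := hlb l (by simp)
      have hlbs : ∀ x ∈ ls, -1 ≤ x := fun x hx => hlb x (by simp [hx])
      by_cases hl : l = -1
      · have h0 : ¬ (0:ℕ) < 0 := lt_irrefl 0
        simp only [incLab, if_pos hl, if_neg h0, List.mem_cons, not_or]
        exact ⟨by norm_num, incLab_zero_not_mem ls hlbs⟩
      · simp only [incLab, if_neg hl, List.mem_cons, not_or]
        exact ⟨by omega, incLab_zero_not_mem ls hlbs⟩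

theorem incLab_h3 (d : ℤ) (hd : 0 ≤ d) :
    ∀ (L : List ℤ) (m : ℕ), (∀ x ∈ L, -1 ≤ x) →
    (∀ a b, L = a ++ d :: b → ∀ x ∈ a, d ≤ x) →
    ∀ a b, (incLab L m).1 = a ++ (d+1) :: b → ∀ x ∈ a, d + 1 ≤ x
  | [], m, _, _, a, b, heq => by simp [incLab] at heq
  | l :: ls, m, hlb, h3, a, b, heq => by
      have hlbs : ∀ x ∈ ls, -1 ≤ x := fun x hx => hlb x (by simp [hx])
      match a with
      | [] => simp
      | a0 :: a' =>
        -- pick apart head/tail of (incLab (l::ls) m).1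
        have hmem : (d+1) ∈ a' ++ (d+1) :: b := by simp
        -- establish d ≤ l using that d+1 occurs in the transformed tail
        have hstep : ∀ (m' : ℕ) (v : ℤ),
            (incLab (l :: ls) m).1 = v :: (incLab ls m').1 →
            v = a0 ∧ (incLab ls m').1 = a' ++ (d+1) :: b → d ≤ l := by
          intro m' v _ hvh
          have hmem' : (d+1) ∈ (incLab ls m').1 := by rw [hvh.2]; exact hmem
          have hdls : d ∈ ls := by
            have := incLab_mem_pos ls m' (d+1) (by omega) hmem'
            simpa using this
          obtain ⟨s, t, hst⟩ := List.append_of_mem hdls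
          exact h3 (l :: s) t (by rw [hst]; rfl) l (by simp)
        have h3' : ∀ a b, ls = a ++ d :: b → ∀ x ∈ a, d ≤ x := by
          intro a b hab x hx
          exact h3 (l :: a) b (by rw [hab]; rfl) x (by simp [hx])
        by_cases hl : l = -1
        · by_cases hm : 0 < m
          · simp only [incLab, if_pos hl, if_pos hm, List.cons_append, List.cons.injEq] at heq
            have hdl := hstep (m-1) 0 (by simp [incLab, hl, hm]) heq
            omega
          · simp only [incLab, if_pos hl, if_neg hm, List.cons_append, List.cons.injEq] at heq
            have hdl := hstep m (-1) (by simp [incLab, hl, hm]) heq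
            omega
        · simp only [incLab, if_neg hl, List.cons_append, List.cons.injEq] at heq
          have ih := incLab_h3 d hd ls m hlbs h3' a' b heq.2
          intro x hx
          rcases List.mem_cons.1 hx with rfl | hx
          · have hdl := hstep m (l+1) (by simp [incLab, hl]) heq
            omega
          · exact ih x hx

theorem incLab_h3_zero :
    ∀ (L : List ℤ) (m : ℕ), (∀ x ∈ L, -1 ≤ x) →
    ∀ a b, (incLab L m).1 = a ++ (0:ℤ) :: b → ∀ x ∈ a, 0 ≤ x
  | [], m, _, a, b, heq => by simp [incLab] at heq
  | l :: ls, m, hlb, a, b, heq => by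
      have hlbl : -1 ≤ l := hlb l (by simp)
      have hlbs : ∀ x ∈ ls, -1 ≤ x := fun x hx => hlb x (by simp [hx])
      match a with
      | [] => simp
      | a0 :: a' =>
        by_cases hl : l = -1
        · by_cases hm : 0 < m
          · simp only [incLab, if_pos hl, if_pos hm, List.cons_append, List.cons.injEq] at heq
            intro x hx
            rcases List.mem_cons.1 hx with rfl | hx
            · omega
            · exact incLab_h3_zero ls (m-1) hlbs a' b heq.2 x hx
          · simp only [incLab, if_pos hl, if_neg hm, List.cons_append, List.cons.injEq] at heq
            exfalso
            have hm0 : m = 0 := by omega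
            subst hm0
            exact incLab_zero_not_mem ls hlbs (by rw [heq.2]; simp)
        · simp only [incLab, if_neg hl, List.cons_append, List.cons.injEq] at heq
          intro x hx
          rcases List.mem_cons.1 hx with rfl | hx
          · omega
          · exact incLab_h3_zero ls m hlbs a' b heq.2 x hx

theorem mem_labelsList : ∀ {x : ℤ} {ts : List DTree}, x ∈ leafLabelsList ts →
    ∃ t ∈ ts, x ∈ leafLabels t
  | x, [], h => by simp [leafLabelsList] at h
  | x, t :: ts, h => by
      simp only [leafLabelsList, List.mem_append] at h
      rcases h with h | h
      · exact ⟨t, by simp, h⟩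
      · obtain ⟨u, hu, hx⟩ := mem_labelsList h
        exact ⟨u, by simp [hu], hx⟩

theorem deco_lb {T : DTree} {d : ℕ} (h : DecoAt T d) : ∀ x ∈ leafLabels T, -1 ≤ x := by
  induction h with
  | leaf h1 h2 => simpa [leafLabels] using h1
  | node hne h2 h3 h4 ih =>
      intro x hx
      simp only [leafLabels] at hx
      obtain ⟨t, ht, hx⟩ := mem_labelsList hx
      exact ih t ht x hx

theorem decList_incList : ∀ (ts : List DTree),
    (∀ t ∈ ts, ∀ m, decLeaves (incUpTo t m).1 = t) → ∀ m, decList (incList ts m).1 = ts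
  | [], _, m => by simp [incList, decList]
  | t :: ts, h, m => by
      simp only [incList, decList]
      rw [h t (by simp) m, decList_incList ts (fun u hu => h u (by simp [hu]))]

theorem dec_inc {T : DTree} {d : ℕ} (h : DecoAt T d) : ∀ m, decLeaves (incUpTo T m).1 = T := by
  induction h with
  | @leaf l d h1 h2 =>
      intro m
      by_cases hl : l = -1
      · by_cases hm : 0 < m <;> simp [incUpTo, decLeaves, hl, hm]
      · have hne : l + 1 ≠ -1 := by omega
        simp [incUpTo, decLeaves, hl, hne]
  | @node ts d hne h2 h3 h4 ih =>
      intro m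
      simp only [incUpTo, decLeaves]
      rw [decList_incList ts (fun t ht => ih t ht)]

theorem mem_incList : ∀ {t' : DTree} (ts : List DTree) (m : ℕ),
    t' ∈ (incList ts m).1 → ∃ t ∈ ts, ∃ m', t' = (incUpTo t m').1
  | t', [], m, h => by simp [incList] at h
  | t', t :: ts, m, h => by
      simp only [incList, List.mem_cons] at h
      rcases h with h | h
      · exact ⟨t, by simp, m, h⟩
      · obtain ⟨u, hu, m', he⟩ := mem_incList ts _ h
        exact ⟨u, by simp [hu], m', he⟩

theorem incList_ne : ∀ (ts : List DTree) (m : ℕ), ts ≠ [] → (incList ts m).1 ≠ []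
  | [], m, h => absurd rfl h
  | t :: ts, m, _ => by simp [incList]

theorem incT_deco {T : DTree} {d : ℕ} (h : DecoAt T d) :
    ∀ m, 0 < d → DecoAt (incUpTo T m).1 (d + 1) := by
  induction h with
  | @leaf l d h1 h2 =>
      intro m hd
      by_cases hl : l = -1
      · by_cases hm : 0 < m
        · simp only [incUpTo, if_pos hl, if_pos hm]
          exact DecoAt.leaf (by norm_num) (by push_cast; omega)
        · simp only [incUpTo, if_pos hl, if_neg hm]
          exact DecoAt.leaf (by norm_num) (by push_cast; omega)
      · simp only [incUpTo, if_neg hl]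
        exact DecoAt.leaf (by omega) (by push_cast at h2 ⊢; omega)
  | @node ts d hne h2 h3 h4 ih =>
      intro m hd
      simp only [incUpTo]
      refine DecoAt.node (incList_ne ts m hne) ?_ ?_ ?_
      · intro _
        obtain ⟨x, hx, hxle⟩ := h2 hd
        obtain ⟨y, hy, hyle⟩ := incLab_exists_le (leafLabelsList ts) m ((d:ℤ) - 2) ⟨x, hx, hxle⟩
        refine ⟨y, ?_, by push_cast; omega⟩
        rw [(bridgeL ts m).1]; exact hy
      · intro t'' ht'' a b heq x hx
        obtain ⟨t, ht, m', rfl⟩ := mem_incList ts m ht''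
        rw [(bridge t m').1] at heq
        have hcast : ((d : ℤ) + 1) = ((d + 1 : ℕ) : ℤ) := by push_cast; ring
        have := incLab_h3 (d : ℤ) (by positivity) (leafLabels t) m'
          (deco_lb (h4 t ht)) (h3 t ht) a b (by rw [hcast]; exact heq) x hx
        omega
      · intro t'' ht''
        obtain ⟨t, ht, m', rfl⟩ := mem_incList ts m ht''
        exact ih t ht m' (by omega)

end Aux

theorem stmt6 (T1 T2 : DTree) (i : ℕ) (h1 : IsDeco T1) (h2 : IsDeco T2)
    (hi1 : 1 ≤ i) (hi2 : i ≤ fl T1) :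
    IsDeco (oplusT T1 i T2) ∧ hdT (oplusT T1 i T2) = T1 ∧
      tlT (oplusT T1 i T2) = T2 ∧ fl (oplusT T1 i T2) = i + fl T2 := by
  obtain ⟨ts1, rfl⟩ : ∃ ts, T1 = .node ts := by
    cases T1 with
    | leaf l => cases h1 with | leaf ha hb => exfalso; simp at hb; omega
    | node ts => exact ⟨ts, rfl⟩
  obtain ⟨ts2, rfl⟩ : ∃ ts, T2 = .node ts := by
    cases T2 with
    | leaf l => cases h2 with | leaf ha hb => exfalso; simp at hb; omega
    | node ts => exact ⟨ts, rfl⟩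
  set m : ℕ := fl (DTree.node ts1) - i with hmdef
  set A : DTree := (incUpTo (DTree.node ts1) m).1 with hAdef
  have hop : oplusT (.node ts1) i (.node ts2) = .node (A :: ts2) := rfl
  have hflT1 : fl (DTree.node ts1) = (leafLabels (DTree.node ts1)).count (-1) := rfl
  have hlb1 : ∀ x ∈ leafLabels (DTree.node ts1), -1 ≤ x := deco_lb h1
  have hm_le : m ≤ (leafLabels (DTree.node ts1)).count (-1) := by
    rw [← hflT1]; omega
  have hcountA : (leafLabels A).count (-1) = i := by
    rw [hAdef, (bridge (DTree.node ts1) m).1, incLab_count _ m hlb1 hm_le, ← hflT1]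
    omega
  have hA : A = DTree.node (incList ts1 m).1 := rfl
  cases h1 with
  | node hne1 h21 h31 h41 =>
  cases h2 with
  | node hne2 h22 h32 h42 =>
  rw [hop]
  have hlb1' : ∀ t ∈ ts1, ∀ x ∈ leafLabels t, -1 ≤ x := by
    intro t ht
    exact deco_lb (h41 t ht)
  have hDecA : DecoAt A 1 := by
    rw [hA]
    refine DecoAt.node (incList_ne ts1 m hne1) ?_ ?_ ?_
    · intro _
      have hcnt : (leafLabelsList (incList ts1 m).1).count (-1) = i := by
        have : leafLabelsList (incList ts1 m).1 = leafLabels A := by rw [hA]; rfl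
        rw [this, hcountA]
      have hmem : (-1 : ℤ) ∈ leafLabelsList (incList ts1 m).1 := by
        rw [← List.count_pos_iff, hcnt]; omega
      exact ⟨-1, hmem, by norm_num⟩
    · intro t'' ht'' a b heq x hx
      obtain ⟨t, ht, m', rfl⟩ := mem_incList ts1 m ht''
      rw [(bridge t m').1] at heq
      have h3old : ∀ a b, leafLabels t = a ++ (0:ℤ) :: b → ∀ x ∈ a, (0:ℤ) ≤ x := by
        intro a b hab x hx
        have := h31 t ht a b (by exact_mod_cast hab) x hx
        exact_mod_cast this
      have heq' : (incLab (leafLabels t) m').1 = a ++ ((0:ℤ)+1) :: b := by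
        rw [heq]; norm_num
      have := incLab_h3 0 le_rfl (leafLabels t) m' (hlb1' t ht) h3old a b heq' x hx
      push_cast
      omega
    · intro t'' ht''
      obtain ⟨t, ht, m', rfl⟩ := mem_incList ts1 m ht''
      exact incT_deco (h41 t ht) m' one_pos
  refine ⟨?_, ?_, rfl, ?_⟩
  · refine DecoAt.node (by simp) ?_ ?_ ?_
    · intro h0; omega
    · intro t' ht' a b heq x hx
      have heq' : leafLabels t' = a ++ (0:ℤ) :: b := by exact_mod_cast heq
      rcases List.mem_cons.1 ht' with rfl | ht'
      · rw [hAdef, (bridge (DTree.node ts1) m).1] at heq'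
        have := incLab_h3_zero _ m hlb1 a b heq' x hx
        exact_mod_cast this
      · have := h32 t' ht' a b (by exact_mod_cast heq') x hx
        exact_mod_cast this
    · intro t' ht'
      rcases List.mem_cons.1 ht' with rfl | ht'
      · exact hDecA
      · exact h42 t' ht'
  · show decLeaves A = DTree.node ts1
    rw [hAdef]
    exact dec_inc (DecoAt.node hne1 h21 h31 h41) m
  · show (leafLabels (DTree.node (A :: ts2))).count (-1) = i + fl (DTree.node ts2)
    have hsplit : leafLabels (DTree.node (A :: ts2)) = leafLabels A ++ leafLabelsList ts2 := rfl
    rw [hsplit, List.count_append, hcountA]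
    rfl
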